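/- arXiv:2009.04168 — 3 statements merged into one kernel-verified Lean document; each statement's English description precedes it below -/
import Mathlib

section
/- Let X be a separable reflexive Banach space and (Ω, F, ℙ) a probability space. If C ⊆ X is nonempty, closed, convex, and bounded, then the set X₀ = {x ∈ L^∞(Ω, X) : x(ω) ∈ C a.s.} is convex, bounded, and closed with respect to the weak* topology of L^∞(Ω, X) = (L¹(Ω, X*))*. -/
open MeasureTheory Metric Topology

lemma exists_countable_halfspaces {X : Type*} [NormedAddCommGroup X] [NormedSpace ℝ X]
    [TopologicalSpace.SeparableSpace X]
    (C : Set X) (hne : C.Nonempty) (hcl : IsClosed C) (hconv : Convex ℝ C) :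
    ∃ F : ℕ × ℚ → (X →L[ℝ] ℝ) × ℝ,
      (∀ p, ∀ y ∈ C, (F p).1 y ≤ (F p).2) ∧
      (∀ x : X, (∀ p, (F p).1 x ≤ (F p).2) → x ∈ C) := by
  have : Nonempty X := ⟨hne.choose⟩
  obtain ⟨u, hu⟩ := TopologicalSpace.exists_dense_seq X
  have key : ∀ p : ℕ × ℚ, ∃ fc : (X →L[ℝ] ℝ) × ℝ,
      (∀ y ∈ C, fc.1 y ≤ fc.2) ∧
      (Disjoint (ball (u p.1) (p.2 : ℝ)) C →
        ∀ a ∈ ball (u p.1) (p.2 : ℝ), fc.2 < fc.1 a) := by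
    intro p
    by_cases h : Disjoint (ball (u p.1) (p.2 : ℝ)) C
    · obtain ⟨f, c, hfc1, hfc2⟩ := geometric_hahn_banach_open (convex_ball _ _) isOpen_ball hconv h
      refine ⟨(-f, -c), fun y hy => ?_, fun _ a ha => ?_⟩
      · simpa using hfc2 y hy
      · simpa using hfc1 a ha
    · exact ⟨(0, 0), by simp, fun hd => absurd hd h⟩
  choose F hF1 hF2 using key
  refine ⟨F, hF1, fun x hx => ?_⟩
  by_contra hxC
  have hd : 0 < infDist x C := (hcl.notMem_iff_infDist_pos hne).1 hxC
  obtain ⟨q, hq0, hq2⟩ : ∃ q : ℚ, 0 < (q : ℝ) ∧ (q : ℝ) < infDist x C / 2 := by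
    obtain ⟨q, h1, h2⟩ := exists_rat_btwn (half_pos hd)
    exact ⟨q, h1, h2⟩
  obtain ⟨n, hn⟩ := hu.exists_dist_lt x hq0
  have hdisj : Disjoint (ball (u n) (q : ℝ)) C := by
    rw [Set.disjoint_left]
    intro y hy hyC
    have h1 : dist x y ≤ dist x (u n) + dist (u n) y := dist_triangle _ _ _
    have h2 : dist (u n) y < q := by rw [dist_comm]; exact mem_ball.1 hy
    have h3 : infDist x C ≤ dist x y := infDist_le_dist_of_mem hyC
    linarith
  have hxball : x ∈ ball (u n) (q : ℝ) := mem_ball.2 hn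
  exact absurd (hx (n, q)) (not_le.2 (hF2 (n, q) hdisj x hxball))

noncomputable instance : Fact ((1 : ENNReal) ≤ ⊤) := ⟨le_top⟩

/-- The weak* topology on `L^∞(Ω,X) = (L¹(Ω,X*))*`: the initial topology induced by the
pairings `x ↦ ∫ ⟨g(ω), x(ω)⟩ dℙ(ω)` with integrable `X*`-valued densities `g`. -/
noncomputable def weakStarTopology {Ω : Type*} [MeasurableSpace Ω] (μ : Measure Ω)
    (X : Type*) [NormedAddCommGroup X] [NormedSpace ℝ X] :
    TopologicalSpace (Lp X ⊤ μ) :=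
  ⨅ g ∈ {g : Ω → (X →L[ℝ] ℝ) | Integrable g μ},
    TopologicalSpace.induced
      (fun x : Lp X ⊤ μ => ∫ ω, g ω ((x : Ω → X) ω) ∂μ) inferInstance

lemma weakStar_closed_halfspace {Ω : Type*} [MeasurableSpace Ω] (μ : Measure Ω)
    {X : Type*} [NormedAddCommGroup X] [NormedSpace ℝ X]
    {g : Ω → (X →L[ℝ] ℝ)} (hg : Integrable g μ) (r : ℝ) :
    IsClosed[weakStarTopology μ X]
      {x : Lp X ⊤ μ | ∫ ω, g ω ((x : Ω → X) ω) ∂μ ≤ r} := by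
  have hle : weakStarTopology μ X ≤
      TopologicalSpace.induced (fun x : Lp X ⊤ μ => ∫ ω, g ω ((x : Ω → X) ω) ∂μ)
        inferInstance := by
    exact iInf₂_le g hg
  have hcont : Continuous[weakStarTopology μ X, inferInstance]
      (fun x : Lp X ⊤ μ => ∫ ω, g ω ((x : Ω → X) ω) ∂μ) :=
    continuous_iff_le_induced.mpr hle
  have : {x : Lp X ⊤ μ | ∫ ω, g ω ((x : Ω → X) ω) ∂μ ≤ r}
      = (fun x : Lp X ⊤ μ => ∫ ω, g ω ((x : Ω → X) ω) ∂μ) ⁻¹' Set.Iic r := rfl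
  rw [this]
  exact @IsClosed.preimage _ _ (weakStarTopology μ X) _ _ hcont _ isClosed_Iic

lemma isClosed_iInter_topo {α : Type*} {ι : Sort*} (T : TopologicalSpace α) {s : ι → Set α}
    (h : ∀ i, IsClosed[T] (s i)) : IsClosed[T] (⋂ i, s i) := by
  letI := T
  exact isClosed_iInter h

/-- For a nonempty closed convex bounded set `C ⊆ X` (X separable reflexive),
`X₀ = {x ∈ L^∞(Ω,X) : x(ω) ∈ C a.s.}` is convex, norm-bounded, and closed in the weak*
topology of `L^∞(Ω,X) = (L¹(Ω,X*))*`. -/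
theorem ae_constraint_set_convex_bounded_weakStarClosed
    {Ω : Type*} [MeasurableSpace Ω] (μ : Measure Ω) [IsProbabilityMeasure μ]
    {X : Type*} [NormedAddCommGroup X] [NormedSpace ℝ X] [CompleteSpace X]
    [TopologicalSpace.SeparableSpace X]
    (hrefl : Function.Surjective (NormedSpace.inclusionInDoubleDual ℝ X))
    (C : Set X) (hne : C.Nonempty) (hcl : IsClosed C) (hconv : Convex ℝ C)
    (hbdd : Bornology.IsBounded C) :
    Convex ℝ {x : Lp X ⊤ μ | ∀ᵐ ω ∂μ, (x : Ω → X) ω ∈ C} ∧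
    (∃ M : ℝ, ∀ x ∈ {x : Lp X ⊤ μ | ∀ᵐ ω ∂μ, (x : Ω → X) ω ∈ C}, ‖x‖ ≤ M) ∧
    @IsClosed _ (weakStarTopology μ X) {x : Lp X ⊤ μ | ∀ᵐ ω ∂μ, (x : Ω → X) ω ∈ C} := by
  refine ⟨?_, ?_, ?_⟩
  · -- Convexity
    intro x hx y hy a b ha hb hab
    have h1 := Lp.coeFn_add (a • x) (b • y)
    have h2 := Lp.coeFn_smul a x
    have h3 := Lp.coeFn_smul b y
    filter_upwards [hx, hy, h1, h2, h3] with ω hxω hyω e1 e2 e3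
    rw [e1, Pi.add_apply, e2, e3, Pi.smul_apply, Pi.smul_apply]
    exact hconv hxω hyω ha hb hab
  · -- Boundedness
    obtain ⟨M, hM⟩ := hbdd.subset_closedBall 0
    refine ⟨max M 0, fun x hx => ?_⟩
    have hb : ∀ᵐ ω ∂μ, ‖(x : Ω → X) ω‖ ≤ max M 0 := by
      filter_upwards [hx] with ω hω
      exact le_max_of_le_left (by simpa [mem_closedBall, dist_zero_right] using hM hω)
    rw [Lp.norm_def]
    refine ENNReal.toReal_le_of_le_ofReal (le_max_right _ _) ?_
    have h := eLpNorm_le_of_ae_bound (p := (⊤ : ENNReal)) (μ := μ) hb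
    simpa using h
  · -- weak* closedness
    obtain ⟨F, hF1, hF2⟩ := exists_countable_halfspaces C hne hcl hconv
    have hint : ∀ (x : Lp X ⊤ μ) (p : ℕ × ℚ),
        Integrable (fun ω => (F p).1 ((x : Ω → X) ω)) μ := fun x p =>
      ((F p).1.comp_memLp' (Lp.memLp x)).integrable le_top
    have heval : ∀ (x : Lp X ⊤ μ) (p : ℕ × ℚ) (A : Set Ω), MeasurableSet A →
        ∫ ω, (Set.indicator A (fun _ => (F p).1) ω) ((x : Ω → X) ω) ∂μ
          = ∫ ω in A, (F p).1 ((x : Ω → X) ω) ∂μ := by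
      intro x p A hA
      rw [← integral_indicator hA]
      congr 1
      ext ω
      by_cases hω : ω ∈ A <;> simp [hω]
    have hSeq : {x : Lp X ⊤ μ | ∀ᵐ ω ∂μ, (x : Ω → X) ω ∈ C}
        = ⋂ (pA : (ℕ × ℚ) × {A : Set Ω // MeasurableSet A}),
          {x : Lp X ⊤ μ | ∫ ω, (Set.indicator pA.2.1 (fun _ => (F pA.1).1) ω)
            ((x : Ω → X) ω) ∂μ ≤ (F pA.1).2 * (μ pA.2.1).toReal} := by
      ext x
      simp only [Set.mem_iInter, Set.mem_setOf_eq]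
      constructor
      · rintro hx ⟨p, A, hA⟩
        rw [heval x p A hA]
        have hle : ∫ ω in A, (F p).1 ((x : Ω → X) ω) ∂μ ≤ ∫ _ in A, (F p).2 ∂μ := by
          apply integral_mono_ae ((hint x p).restrict) (integrableOn_const (measure_ne_top _ _))
          refine ae_restrict_of_ae ?_
          filter_upwards [hx] with ω hω using hF1 p _ hω
        simpa [setIntegral_const, smul_eq_mul, mul_comm, measureReal_def] using hle
      · intro h
        have hae : ∀ p : ℕ × ℚ, ∀ᵐ ω ∂μ, (F p).1 ((x : Ω → X) ω) ≤ (F p).2 := by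
          intro p
          have hnn : 0 ≤ᵐ[μ] fun ω => (F p).2 - (F p).1 ((x : Ω → X) ω) := by
            apply ae_nonneg_of_forall_setIntegral_nonneg
              ((integrable_const _).sub (hint x p))
            intro s hs _
            simp only [Pi.sub_apply]
            rw [integral_sub ((integrable_const _).restrict) ((hint x p).restrict),
              setIntegral_const, smul_eq_mul]
            have h2 := h (p, ⟨s, hs⟩)
            rw [heval x p s hs] at h2
            simp only [measureReal_def] at h2 ⊢
            linarith
          filter_upwards [hnn] with ω hω
          simpa [sub_nonneg] using hω
        have hall : ∀ᵐ ω ∂μ, ∀ p : ℕ × ℚ, (F p).1 ((x : Ω → X) ω) ≤ (F p).2 :=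
          ae_all_iff.2 hae
        filter_upwards [hall] with ω hω using hF2 _ hω
    rw [hSeq]
    refine isClosed_iInter_topo (weakStarTopology μ X) fun pA => ?_
    exact weakStar_closed_halfspace μ
      ((integrable_const ((F pA.1).1)).indicator pA.2.2) _
end

section
/- Let X be a separable reflexive Banach space, C ⊆ X nonempty closed convex, q ∈ L¹(Ω, X*), and x̄ ∈ L^∞(Ω, X) with x̄(ω) ∈ C a.s. If ∫_Ω ⟨q(ω), x(ω) − x̄(ω)⟩ dℙ(ω) ≥ 0 for every x ∈ L^∞(Ω, X) with x(ω) ∈ C a.s., then for almost every ω, ⟨q(ω), c − x̄(ω)⟩ ≥ 0 for all c ∈ C. -/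
open MeasureTheory

/-- If the integrated variational inequality
`∫ ⟨q(ω), x(ω) - x̄(ω)⟩ dℙ ≥ 0` holds over all essentially bounded selections `x` of a
nonempty closed convex set `C` (in a separable reflexive Banach space), then the pointwise
variational inequality `⟨q(ω), c - x̄(ω)⟩ ≥ 0` for all `c ∈ C` holds almost surely. -/
theorem pointwise_variational_inequality_of_integrated
    {Ω : Type*} [MeasurableSpace Ω] (μ : Measure Ω) [IsProbabilityMeasure μ]
    {X : Type*} [NormedAddCommGroup X] [NormedSpace ℝ X] [CompleteSpace X]
    [TopologicalSpace.SeparableSpace X]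
    (hrefl : Function.Surjective (NormedSpace.inclusionInDoubleDual ℝ X))
    (C : Set X) (hne : C.Nonempty) (hcl : IsClosed C) (hconv : Convex ℝ C)
    (q : Ω → (X →L[ℝ] ℝ)) (hq : Integrable q μ)
    (xbar : Ω → X) (hxbar : MemLp xbar ⊤ μ) (hxbarC : ∀ᵐ ω ∂μ, xbar ω ∈ C)
    (hineq : ∀ x : Ω → X, MemLp x ⊤ μ → (∀ᵐ ω ∂μ, x ω ∈ C) →
      0 ≤ ∫ ω, q ω (x ω - xbar ω) ∂μ) :
    ∀ᵐ ω ∂μ, ∀ c ∈ C, 0 ≤ q ω (c - xbar ω) := by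
  classical
  -- strongly measurable representatives
  set q' : Ω → (X →L[ℝ] ℝ) := hq.1.mk q with hq'def
  have hq'sm : StronglyMeasurable q' := hq.1.stronglyMeasurable_mk
  have hq'ae : q =ᵐ[μ] q' := hq.1.ae_eq_mk
  set xbar' : Ω → X := hxbar.1.mk xbar with hxbar'def
  have hxbar'sm : StronglyMeasurable xbar' := hxbar.1.stronglyMeasurable_mk
  have hxbar'ae : xbar =ᵐ[μ] xbar' := hxbar.1.ae_eq_mk
  -- essential bound on xbar
  set B : ℝ := (eLpNormEssSup xbar μ).toReal with hBdef
  have hBfin : eLpNormEssSup xbar μ < ⊤ := by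
    have := hxbar.2
    rwa [eLpNorm_exponent_top] at this
  have hxbarB : ∀ᵐ ω ∂μ, ‖xbar ω‖ ≤ B := by
    filter_upwards [ae_le_eLpNormEssSup (f := xbar) (μ := μ)] with ω hω
    have : (‖xbar ω‖₊ : ENNReal) ≤ eLpNormEssSup xbar μ := hω
    have h2 := ENNReal.toReal_mono hBfin.ne this
    simpa using h2
  -- key pointwise step for a fixed c ∈ C
  have key : ∀ c ∈ C, ∀ᵐ ω ∂μ, 0 ≤ q ω (c - xbar ω) := by
    intro c hc
    -- measurable version of the integrand
    set g : Ω → ℝ := fun ω => q' ω (c - xbar' ω) with hgdef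
    have hgsm : StronglyMeasurable g := by
      have hcont : Continuous fun p : (X →L[ℝ] ℝ) × X => p.1 p.2 :=
        isBoundedBilinearMap_apply.continuous
      exact hcont.comp_stronglyMeasurable
        (hq'sm.prodMk ((stronglyMeasurable_const.sub hxbar'sm)))
    have hfg : (fun ω => q ω (c - xbar ω)) =ᵐ[μ] g := by
      filter_upwards [hq'ae, hxbar'ae] with ω h1 h2
      simp [hgdef, h1, h2]
    set A : Set Ω := {ω | g ω < 0} with hAdef
    have hA : MeasurableSet A := by
      have : A = g ⁻¹' (Set.Iio 0) := rfl
      rw [this]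
      exact hgsm.measurable measurableSet_Iio
    -- the competitor selection
    set x : Ω → X := A.piecewise (fun _ => c) xbar' with hxdef
    have hxmem : MemLp x ⊤ μ := by
      refine memLp_top_of_bound
        ((stronglyMeasurable_const.piecewise hA hxbar'sm).aestronglyMeasurable)
        (max ‖c‖ B) ?_
      filter_upwards [hxbarB, hxbar'ae] with ω h1 h2
      by_cases hω : ω ∈ A
      · simp [hxdef, Set.piecewise_eq_of_mem _ _ _ hω, le_max_left]
      · rw [hxdef, Set.piecewise_eq_of_notMem _ _ _ hω, ← h2]
        exact le_max_of_le_right h1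
    have hxC : ∀ᵐ ω ∂μ, x ω ∈ C := by
      filter_upwards [hxbarC, hxbar'ae] with ω h1 h2
      by_cases hω : ω ∈ A
      · simpa [hxdef, Set.piecewise_eq_of_mem _ _ _ hω] using hc
      · rw [hxdef, Set.piecewise_eq_of_notMem _ _ _ hω, ← h2]; exact h1
    have h0 : 0 ≤ ∫ ω, q ω (x ω - xbar ω) ∂μ := hineq x hxmem hxC
    -- integrand equals the indicator of A applied to f
    set f : Ω → ℝ := fun ω => q ω (c - xbar ω) with hfdef
    have hind : (fun ω => q ω (x ω - xbar ω)) =ᵐ[μ] A.indicator f := by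
      filter_upwards [hxbar'ae] with ω h2
      by_cases hω : ω ∈ A
      · simp [hxdef, hfdef, Set.piecewise_eq_of_mem _ _ _ hω, Set.indicator_of_mem hω]
      · rw [hxdef, Set.piecewise_eq_of_notMem _ _ _ hω, Set.indicator_of_notMem hω,
          ← h2]
        simp
    -- f is integrable
    have hfint : Integrable f μ := by
      refine Integrable.mono' (hq.norm.mul_const (‖c‖ + B)) (hgsm.aestronglyMeasurable.congr hfg.symm) ?_
      · filter_upwards [hxbarB] with ω h1
        have h2 : ‖f ω‖ ≤ ‖q ω‖ * ‖c - xbar ω‖ := (q ω).le_opNorm _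
        refine h2.trans ?_
        have : ‖c - xbar ω‖ ≤ ‖c‖ + B := (norm_sub_le _ _).trans (by linarith)
        exact mul_le_mul_of_nonneg_left this (norm_nonneg _)
    have h1 : 0 ≤ ∫ ω in A, f ω ∂μ := by
      rw [← integral_indicator hA]
      exact h0.trans (le_of_eq (integral_congr_ae hind))
    -- f < 0 a.e. on A
    have hfneg : ∀ᵐ ω ∂μ.restrict A, f ω < 0 := by
      rw [ae_restrict_iff' hA]
      filter_upwards [hfg] with ω hω hωA
      rw [hfdef]
      calc q ω (c - xbar ω) = g ω := hω
        _ < 0 := hωA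
    have h2 : ∫ ω in A, f ω ∂μ ≤ 0 :=
      integral_nonpos_of_ae (hfneg.mono fun ω h => h.le)
    have h3 : ∫ ω in A, f ω ∂μ = 0 := le_antisymm h2 h1
    have h4 : ∫ ω in A, (-f) ω ∂μ = 0 := by
      simp [integral_neg, h3]
    have h5 : (-f) =ᵐ[μ.restrict A] 0 := by
      rw [← MeasureTheory.setIntegral_eq_zero_iff_of_nonneg_ae
        (hfneg.mono fun ω h => by simpa using h.le) hfint.neg.integrableOn]
      exact h4
    have hA0 : μ A = 0 := by
      by_contra hne0
      have : ∀ᵐ ω ∂μ.restrict A, False := by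
        filter_upwards [h5, hfneg] with ω h5 hfω
        simp only [Pi.neg_apply, Pi.zero_apply] at h5
        linarith
      have hbot : μ.restrict A = 0 := by
        rw [← Measure.measure_univ_eq_zero]
        simpa using this
      apply hne0
      have := congrArg (fun m => m Set.univ) hbot
      simpa [Measure.restrict_apply_univ] using this
    -- conclude
    have hAc : ∀ᵐ ω ∂μ, ω ∉ A := measure_eq_zero_iff_ae_notMem.mp hA0
    filter_upwards [hAc, hfg] with ω h1 h2
    have h3 : ¬ g ω < 0 := h1
    exact le_of_le_of_eq (not_lt.mp h3) h2.symm
  -- countable dense subset of C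
  obtain ⟨D, hDC, hDcount, hDdense⟩ :=
    (TopologicalSpace.IsSeparable.of_separableSpace C).exists_countable_dense_subset
  have hDae : ∀ᵐ ω ∂μ, ∀ d ∈ D, 0 ≤ q ω (d - xbar ω) :=
    (ae_ball_iff hDcount).mpr fun d hd => key d (hDC hd)
  filter_upwards [hDae] with ω hω c hc
  have hcls : c ∈ closure D := hDdense hc
  have hclosed : IsClosed {y : X | 0 ≤ q ω (y - xbar ω)} :=
    isClosed_le continuous_const (((q ω).continuous).comp (continuous_id.sub continuous_const))
  have hsub : closure D ⊆ {y : X | 0 ≤ q ω (y - xbar ω)} :=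
    closure_minimal (fun d hd => hω d hd) hclosed
  exact hsub hcls
end

section
/- Let h : X₁ → ℝ ∪ {∞} be proper convex and k : X₁ → ℝ ∪ {−∞} be proper concave on a real Banach space X₁, with one of them continuous at a common point of their domains. Then inf_{u ∈ X₁} (h(u) − k(u)) = max_{v ∈ X₁*} (k*(v) − h*(v)), where h*(v) = sup_u (⟨v, u⟩ − h(u)) and k*(v) = inf_u (⟨v, u⟩ − k(u)), and the maximum on the right-hand side is attained. -/
open Set

private lemma er_cases (x : EReal) (hb : x ≠ ⊥) (ht : x ≠ ⊤) : ∃ r : ℝ, x = r :=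
  ⟨x.toReal, (EReal.coe_toReal ht hb).symm⟩

private lemma weak_key (a b : EReal) (r : ℝ) (ha : a ≠ ⊥) (hb : b ≠ ⊤) :
    ((r : EReal) - b) - ((r : EReal) - a) = a - b := by
  induction a with
  | bot => exact absurd rfl ha
  | coe a =>
    induction b with
    | bot =>
      simp only [EReal.coe_sub_bot,
        show ((r : EReal) - (a:EReal)) = ((r - a : ℝ) : EReal) from rfl,
        EReal.top_sub_coe]
    | coe b => norm_cast; ring
    | top => exact absurd rfl hb
  | top =>
    induction b with
    | bot => simp [EReal.coe_sub_bot, EReal.sub_top]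
    | coe b =>
      simp only [EReal.sub_top, EReal.top_sub_coe,
        show ((r : EReal) - (b:EReal)) = ((r - b : ℝ) : EReal) from rfl,
        EReal.coe_sub_bot]
    | top => exact absurd rfl hb

private lemma ereal_iInf_neg {ι : Sort*} (f : ι → EReal) : (⨅ i, -f i) = -⨆ i, f i := by
  refine le_antisymm ?_ (le_iInf fun i => EReal.neg_le_neg_iff.mpr (le_iSup f i))
  have : ∀ i, f i ≤ -⨅ j, -f j := fun i =>
    EReal.le_neg_of_le_neg (iInf_le (fun j => -f j) i)
  have h2 : ⨆ i, f i ≤ -⨅ j, -f j := iSup_le this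
  exact EReal.le_neg_of_le_neg h2

private lemma ereal_iSup_neg {ι : Sort*} (f : ι → EReal) : (⨆ i, -f i) = -⨅ i, f i := by
  have := ereal_iInf_neg (fun i => -f i)
  simp only [neg_neg] at this
  rw [this, neg_neg]

private lemma weak_duality {X₁ : Type*} [NormedAddCommGroup X₁] [NormedSpace ℝ X₁]
    (h k : X₁ → EReal) (hh : ∀ u, h u ≠ ⊥) (hk : ∀ u, k u ≠ ⊤) (v : X₁ →L[ℝ] ℝ) :
    ((⨅ u : X₁, (((v u : ℝ) : EReal) - k u)) - ⨆ u : X₁, (((v u : ℝ) : EReal) - h u))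
      ≤ ⨅ u : X₁, (h u - k u) := by
  refine le_iInf fun u => ?_
  calc (⨅ w : X₁, (((v w : ℝ) : EReal) - k w)) - ⨆ w : X₁, (((v w : ℝ) : EReal) - h w)
      ≤ (((v u : ℝ) : EReal) - k u) - (((v u : ℝ) : EReal) - h u) :=
        EReal.sub_le_sub (iInf_le _ u) (le_iSup (fun w : X₁ => ((v w : ℝ) : EReal) - h w) u)
    _ = h u - k u := weak_key _ _ _ (hh u) (hk u)

private lemma real_seg {c x α : ℝ} (H : ∀ θ : ℝ, 0 < θ → θ < 1 → θ * c + (1 - θ) * x < α) :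
    x ≤ α := by
  by_contra hx
  push_neg at hx
  set θ : ℝ := min (1/2) ((x - α)/(2*(|x - c| + 1))) with hθdef
  have hpos : (0:ℝ) < |x - c| + 1 := by positivity
  have h1 : 0 < θ := lt_min (by norm_num) (div_pos (by linarith) (by positivity))
  have h2 : θ < 1 := lt_of_le_of_lt (min_le_left _ _) (by norm_num)
  have hlt := H θ h1 h2
  have hθ2 : θ ≤ (x - α)/(2*(|x - c| + 1)) := min_le_right _ _
  have hθ2' : θ * (2*(|x - c| + 1)) ≤ x - α := by
    rw [← le_div_iff₀ (by positivity)]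
    exact hθ2
  have habs : x - c ≤ |x - c| + 1 := le_trans (le_abs_self _) (by linarith)
  nlinarith [mul_le_mul_of_nonneg_left habs h1.le]

private lemma fenchel_aux {X₁ : Type*} [NormedAddCommGroup X₁] [NormedSpace ℝ X₁]
    (h k : X₁ → EReal)
    (hh : ∀ u, h u ≠ ⊥) (hk : ∀ u, k u ≠ ⊤)
    (hhconv : ∀ x y : X₁, ∀ a b : ℝ, 0 ≤ a → 0 ≤ b → a + b = 1 →
      h (a • x + b • y) ≤ (a : EReal) * h x + (b : EReal) * h y)
    (hkconc : ∀ x y : X₁, ∀ a b : ℝ, 0 ≤ a → 0 ≤ b → a + b = 1 →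
      (a : EReal) * k x + (b : EReal) * k y ≤ k (a • x + b • y))
    (u₀ : X₁) (h1 : h u₀ ≠ ⊤) (h2 : k u₀ ≠ ⊥) (hcnt : ContinuousAt h u₀) :
    ∃ v : X₁ →L[ℝ] ℝ,
      ((⨅ u : X₁, (((v u : ℝ) : EReal) - k u)) - ⨆ u : X₁, (((v u : ℝ) : EReal) - h u))
        = ⨅ u : X₁, (h u - k u) := by
  obtain ⟨r, hr⟩ := er_cases (h u₀) (hh u₀) h1
  obtain ⟨s, hs⟩ := er_cases (k u₀) h2 (hk u₀)
  have hγtop : (⨅ u : X₁, (h u - k u)) ≠ ⊤ := by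
    refine ne_top_of_le_ne_top (EReal.coe_ne_top (r - s)) ?_
    refine le_trans (iInf_le _ u₀) ?_
    rw [hr, hs]
    exact le_of_eq (EReal.coe_sub r s)
  by_cases hγbot : (⨅ u : X₁, (h u - k u)) = ⊥
  · refine ⟨0, ?_⟩
    rw [hγbot]
    exact le_bot_iff.1 ((weak_duality h k hh hk 0).trans (le_of_eq hγbot))
  obtain ⟨c, hc'⟩ := er_cases _ hγbot hγtop
  have hkey : ∀ u, (c : EReal) ≤ h u - k u := fun u => hc' ▸ iInf_le (fun u => h u - k u) u
  set S : Set (X₁ × ℝ) := {p | h p.1 < (p.2 : EReal)} with hSdef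
  set T : Set (X₁ × ℝ) := {p | (p.2 : EReal) ≤ k p.1 + (c : EReal)} with hTdef
  -- real value extraction on S and T
  have hSreal : ∀ p : X₁ × ℝ, p ∈ S → ∃ x : ℝ, h p.1 = x ∧ x < p.2 := by
    intro p hp
    have hp' : h p.1 < ((p.2 : ℝ) : EReal) := hp
    obtain ⟨x, hx⟩ := er_cases (h p.1) (hh p.1) (hp'.trans (EReal.coe_lt_top p.2)).ne
    refine ⟨x, hx, ?_⟩
    rw [hx] at hp'
    exact EReal.coe_lt_coe_iff.1 hp'
  have hTreal : ∀ p : X₁ × ℝ, p ∈ T → ∃ y : ℝ, k p.1 = y ∧ p.2 ≤ y + c := by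
    intro p hp
    have hp' : ((p.2 : ℝ) : EReal) ≤ k p.1 + (c : EReal) := hp
    have hkb : k p.1 ≠ ⊥ := by
      intro hb
      rw [hb, EReal.bot_add] at hp'
      exact EReal.coe_ne_bot p.2 (le_bot_iff.1 hp')
    obtain ⟨y, hy⟩ := er_cases (k p.1) hkb (hk p.1)
    refine ⟨y, hy, ?_⟩
    rw [hy, ← EReal.coe_add] at hp'
    exact EReal.coe_le_coe_iff.1 hp'
  -- convexity of S
  have hmix : ∀ (x1 x2 t1 t2 a b : ℝ), 0 ≤ a → 0 ≤ b → a + b = 1 → x1 < t1 → x2 < t2 →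
      a * x1 + b * x2 < a * t1 + b * t2 := by
    intro x1 x2 t1 t2 a b ha hb hab hx1 hx2
    rcases ha.lt_or_eq with ha' | ha'
    · nlinarith
    · nlinarith
  have hSconv : Convex ℝ S := by
    intro p hp q hq a b ha hb hab
    obtain ⟨x1, hx1, hx1'⟩ := hSreal p hp
    obtain ⟨x2, hx2, hx2'⟩ := hSreal q hq
    show h (a • p + b • q).1 < (((a • p + b • q).2 : ℝ) : EReal)
    have hfst : (a • p + b • q).1 = a • p.1 + b • q.1 := rfl
    have hsnd : (a • p + b • q).2 = a * p.2 + b * q.2 := rfl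
    rw [hfst, hsnd]
    calc h (a • p.1 + b • q.1) ≤ (a : EReal) * h p.1 + (b : EReal) * h q.1 :=
          hhconv p.1 q.1 a b ha hb hab
      _ = ((a * x1 + b * x2 : ℝ) : EReal) := by
          rw [hx1, hx2]
          push_cast
          rfl
      _ < ((a * p.2 + b * q.2 : ℝ) : EReal) :=
          EReal.coe_lt_coe_iff.2 (hmix x1 x2 p.2 q.2 a b ha hb hab hx1' hx2')
  have hTconv : Convex ℝ T := by
    intro p hp q hq a b ha hb hab
    obtain ⟨y1, hy1, hy1'⟩ := hTreal p hp
    obtain ⟨y2, hy2, hy2'⟩ := hTreal q hq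
    show (((a • p + b • q).2 : ℝ) : EReal) ≤ k (a • p + b • q).1 + (c : EReal)
    have hfst : (a • p + b • q).1 = a • p.1 + b • q.1 := rfl
    have hsnd : (a • p + b • q).2 = a * p.2 + b * q.2 := rfl
    rw [hfst, hsnd]
    calc ((a * p.2 + b * q.2 : ℝ) : EReal) ≤ ((a * y1 + b * y2 + c : ℝ) : EReal) := by
          refine EReal.coe_le_coe_iff.2 ?_
          have hcc : a * c + b * c = c := by rw [← add_mul, hab, one_mul]
          nlinarith [mul_le_mul_of_nonneg_left hy1' ha, mul_le_mul_of_nonneg_left hy2' hb]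
      _ = (a : EReal) * k p.1 + (b : EReal) * k q.1 + (c : EReal) := by
          rw [hy1, hy2]; push_cast; rfl
      _ ≤ k (a • p.1 + b • q.1) + (c : EReal) :=
          add_le_add_left (hkconc p.1 q.1 a b ha hb hab) _
  -- interior points of S above u₀
  have hmemInt : ∀ t : ℝ, r < t → ((u₀, t) : X₁ × ℝ) ∈ interior S := by
    intro t ht
    rw [mem_interior_iff_mem_nhds]
    have hU : {u : X₁ | h u < (((r + t)/2 : ℝ) : EReal)} ∈ nhds u₀ := by
      refine hcnt.preimage_mem_nhds (Iio_mem_nhds ?_)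
      rw [hr]
      exact EReal.coe_lt_coe_iff.2 (by linarith)
    have hV : Ioi ((r + t)/2 : ℝ) ∈ nhds t := Ioi_mem_nhds (by linarith)
    refine Filter.mem_of_superset (prod_mem_nhds hU hV) ?_
    rintro ⟨u, x⟩ ⟨hu, hxm⟩
    exact lt_trans hu (EReal.coe_lt_coe_iff.2 hxm)
  have hTne : ((u₀, s + c) : X₁ × ℝ) ∈ T := by
    show (((s + c : ℝ)) : EReal) ≤ k u₀ + (c : EReal)
    rw [hs, ← EReal.coe_add]
  have hdisj : Disjoint (interior S) T := by
    rw [Set.disjoint_left]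
    intro p hp hpT
    obtain ⟨x, hx, hx'⟩ := hSreal p (interior_subset hp)
    obtain ⟨y, hy, hy'⟩ := hTreal p hpT
    have := hkey p.1
    rw [hx, hy, ← EReal.coe_sub, EReal.coe_le_coe_iff] at this
    linarith
  obtain ⟨f, α, hf1, hf2⟩ :=
    geometric_hahn_banach_open (hSconv.interior) isOpen_interior hTconv hdisj
  -- f ≤ α on S
  have hfS : ∀ p ∈ S, f p ≤ α := by
    intro p hp
    refine real_seg (c := f (u₀, r + 1)) fun θ hθ0 hθ1 => ?_
    have hmem := hSconv.combo_interior_self_mem_interior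
      (hmemInt (r+1) (by linarith)) hp hθ0 (by linarith : (0:ℝ) ≤ 1 - θ) (by ring)
    have := hf1 _ hmem
    rwa [map_add, map_smul, map_smul, smul_eq_mul, smul_eq_mul] at this
  have hsplit : ∀ (u : X₁) (t : ℝ), f (u, t) = f (u, 0) + t * f (0, 1) := by
    intro u t
    have hpt : ((u, t) : X₁ × ℝ) = (u, 0) + t • ((0 : X₁), (1 : ℝ)) := by
      simp [Prod.ext_iff]
    rw [hpt, map_add, map_smul, smul_eq_mul]
  -- β := f (0,1) is negative
  have hβle : f (0, 1) ≤ 0 := by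
    by_contra hβ
    push_neg at hβ
    set t : ℝ := max (r + 1) ((α - f (u₀, 0)) / f (0, 1)) + 1 with htdef
    have ht : r < t := by
      have := le_max_left (r + 1) ((α - f (u₀, 0)) / f (0, 1))
      rw [htdef]
      linarith
    have hlt := hf1 _ (hmemInt t ht)
    rw [hsplit] at hlt
    have h2' : (α - f (u₀, 0)) / f (0, 1) < t := by
      rw [htdef]
      exact lt_of_le_of_lt (le_max_right _ _) (lt_add_one _)
    rw [div_lt_iff₀ hβ] at h2'
    linarith
  have hβne : f (0, 1) ≠ 0 := by
    intro h0
    have hA := hf1 _ (hmemInt (r + 1) (by linarith))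
    rw [hsplit, h0, mul_zero, add_zero] at hA
    have hB := hf2 _ hTne
    rw [hsplit, h0, mul_zero, add_zero] at hB
    linarith
  have hβ : f (0, 1) < 0 := lt_of_le_of_ne hβle hβne
  have hlam0 : 0 < -f (0, 1) := by linarith
  set lam : ℝ := -f (0, 1) with hlamdef
  set v : X₁ →L[ℝ] ℝ := lam⁻¹ • (f.comp (ContinuousLinearMap.inl ℝ X₁ ℝ)) with hvdef
  have hv : ∀ u : X₁, v u = f (u, 0) / lam := by
    intro u
    rw [hvdef]
    simp [ContinuousLinearMap.inl_apply, div_eq_inv_mul]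
  set a : ℝ := α / lam with hadef
  -- bound on h side
  have bound1 : ∀ u : X₁, ((v u : ℝ) : EReal) - h u ≤ ((a : ℝ) : EReal) := by
    intro u
    by_cases htop : h u = ⊤
    · rw [htop, EReal.sub_top]
      exact bot_le
    obtain ⟨x, hx⟩ := er_cases (h u) (hh u) htop
    have hfx : f (u, x) ≤ α := by
      refine le_of_forall_pos_le_add fun ε hε => ?_
      have hmem : ((u, x + ε / lam) : X₁ × ℝ) ∈ S := by
        show h u < ((x + ε / lam : ℝ) : EReal)
        rw [hx]
        exact EReal.coe_lt_coe_iff.2 (by linarith [div_pos hε hlam0])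
      have := hfS _ hmem
      rw [hsplit] at this
      rw [hsplit]
      have hf01 : f (0, 1) = -lam := by rw [hlamdef]; ring
      have hdiv : (ε / lam) * lam = ε := div_mul_cancel₀ ε (ne_of_gt hlam0)
      rw [hf01] at this
      nlinarith [this]
    have hreal : v u - x ≤ a := by
      rw [hv u, hadef]
      rw [hsplit] at hfx
      have hf01 : f (0, 1) = -lam := by rw [hlamdef]; ring
      rw [hf01] at hfx
      rw [div_sub' (ne_of_gt hlam0), div_le_div_iff₀ hlam0 hlam0]
      nlinarith [hfx]
    rw [hx, ← EReal.coe_sub]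
    exact EReal.coe_le_coe_iff.2 hreal
  -- bound on k side
  have bound2 : ∀ u : X₁, ((a + c : ℝ) : EReal) ≤ ((v u : ℝ) : EReal) - k u := by
    intro u
    by_cases hbot : k u = ⊥
    · rw [hbot, EReal.coe_sub_bot]
      exact le_top
    obtain ⟨y, hy⟩ := er_cases (k u) hbot (hk u)
    have hmem : ((u, y + c) : X₁ × ℝ) ∈ T := by
      show ((y + c : ℝ) : EReal) ≤ k u + (c : EReal)
      rw [hy, ← EReal.coe_add]
    have hge := hf2 _ hmem
    rw [hsplit] at hge
    have hreal : a + c ≤ v u - y := by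
      rw [hv u, hadef]
      have hf01 : f (0, 1) = -lam := by rw [hlamdef]; ring
      rw [hf01] at hge
      rw [div_add' _ _ _ (ne_of_gt hlam0), div_sub' (ne_of_gt hlam0),
        div_le_div_iff₀ hlam0 hlam0]
      have hkey2 : α + c * lam ≤ f (u, 0) - lam * y := by nlinarith [hge]
      nlinarith [mul_le_mul_of_nonneg_right hkey2 hlam0.le]
    rw [hy, ← EReal.coe_sub]
    exact EReal.coe_le_coe_iff.2 hreal
  refine ⟨v, le_antisymm (weak_duality h k hh hk v) ?_⟩
  rw [hc']
  calc ((c : ℝ) : EReal) = ((a + c : ℝ) : EReal) - ((a : ℝ) : EReal) := by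
        rw [← EReal.coe_sub]
        norm_num
    _ ≤ ((⨅ u : X₁, (((v u : ℝ) : EReal) - k u)) - ⨆ u : X₁, (((v u : ℝ) : EReal) - h u)) :=
        EReal.sub_le_sub (le_iInf bound2) (iSup_le bound1)

private lemma coe_mul_ne_top' {a : ℝ} (ha : 0 ≤ a) {x : EReal} (hx : x ≠ ⊤) :
    (a : EReal) * x ≠ ⊤ := by
  induction x with
  | bot =>
    rcases ha.lt_or_eq with hpos | hzero
    · rw [EReal.coe_mul_bot_of_pos hpos]
      exact bot_ne_top
    · rw [← hzero]
      norm_num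
  | coe x =>
    rw [← EReal.coe_mul]
    exact EReal.coe_ne_top _
  | top => exact absurd rfl hx

private lemma coe_mul_ne_bot' {a : ℝ} (ha : 0 ≤ a) {x : EReal} (hx : x ≠ ⊥) :
    (a : EReal) * x ≠ ⊥ := by
  induction x with
  | top =>
    rcases ha.lt_or_eq with hpos | hzero
    · rw [EReal.coe_mul_top_of_pos hpos]
      exact top_ne_bot
    · rw [← hzero]
      norm_num
  | coe x =>
    rw [← EReal.coe_mul]
    exact EReal.coe_ne_bot _
  | bot => exact absurd rfl hx

private lemma ereal_neg_sub_neg (x y : EReal) : -y - -x = x - y := by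
  rw [sub_eq_add_neg, neg_neg, add_comm, ← sub_eq_add_neg]

private lemma ereal_sub_neg (x y : EReal) : x - -y = x + y := by
  rw [sub_eq_add_neg, neg_neg]


/-- Fenchel's duality theorem. For `h` proper convex and `k` proper concave
on a real Banach space `X₁`, with one of them continuous at a common point of their
domains, `inf_u (h(u) - k(u)) = max_v (k*(v) - h*(v))`, the maximum being attained, where
`h*(v) = sup_u (⟨v,u⟩ - h(u))` and `k*(v) = inf_u (⟨v,u⟩ - k(u))`. -/
theorem fenchel_duality
    {X₁ : Type*} [NormedAddCommGroup X₁] [NormedSpace ℝ X₁] [CompleteSpace X₁]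
    (h k : X₁ → EReal)
    (hhproper : (∀ u, h u ≠ ⊥) ∧ ∃ u, h u ≠ ⊤)
    (hkproper : (∀ u, k u ≠ ⊤) ∧ ∃ u, k u ≠ ⊥)
    (hhconv : ∀ x y : X₁, ∀ a b : ℝ, 0 ≤ a → 0 ≤ b → a + b = 1 →
      h (a • x + b • y) ≤ (a : EReal) * h x + (b : EReal) * h y)
    (hkconc : ∀ x y : X₁, ∀ a b : ℝ, 0 ≤ a → 0 ≤ b → a + b = 1 →
      (a : EReal) * k x + (b : EReal) * k y ≤ k (a • x + b • y))
    (hcont : ∃ u₀ : X₁, h u₀ ≠ ⊤ ∧ k u₀ ≠ ⊥ ∧ (ContinuousAt h u₀ ∨ ContinuousAt k u₀)) :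
    ∃ v : X₁ →L[ℝ] ℝ,
      ((⨅ u : X₁, (((v u : ℝ) : EReal) - k u)) - ⨆ u : X₁, (((v u : ℝ) : EReal) - h u))
        = (⨅ u : X₁, (h u - k u)) ∧
      ∀ v' : X₁ →L[ℝ] ℝ,
        ((⨅ u : X₁, (((v' u : ℝ) : EReal) - k u)) - ⨆ u : X₁, (((v' u : ℝ) : EReal) - h u))
          ≤ ⨅ u : X₁, (h u - k u) := by
  obtain ⟨u₀, h1, h2, hcase⟩ := hcont
  rcases hcase with hch | hck
  · obtain ⟨v, hv⟩ := fenchel_aux h k hhproper.1 hkproper.1 hhconv hkconc u₀ h1 h2 hch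
    exact ⟨v, hv, fun v' => weak_duality h k hhproper.1 hkproper.1 v'⟩
  · have hh₂ : ∀ u, -k u ≠ ⊥ := fun u hc => hkproper.1 u (EReal.neg_eq_bot_iff.1 hc)
    have hk₂ : ∀ u, -h u ≠ ⊤ := fun u hc => hhproper.1 u (EReal.neg_eq_top_iff.1 hc)
    have hconv₂ : ∀ x y : X₁, ∀ a b : ℝ, 0 ≤ a → 0 ≤ b → a + b = 1 →
        (fun u => -k u) (a • x + b • y) ≤
          (a : EReal) * (fun u => -k u) x + (b : EReal) * (fun u => -k u) y := by
      intro x y a b ha hb hab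
      show -k (a • x + b • y) ≤ (a : EReal) * -k x + (b : EReal) * -k y
      rw [mul_neg, mul_neg, ← sub_eq_add_neg,
        ← EReal.neg_add (Or.inr (coe_mul_ne_top' hb (hkproper.1 y)))
          (Or.inl (coe_mul_ne_top' ha (hkproper.1 x))),
        EReal.neg_le_neg_iff]
      exact hkconc x y a b ha hb hab
    have hconc₂ : ∀ x y : X₁, ∀ a b : ℝ, 0 ≤ a → 0 ≤ b → a + b = 1 →
        (a : EReal) * (fun u => -h u) x + (b : EReal) * (fun u => -h u) y ≤
          (fun u => -h u) (a • x + b • y) := by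
      intro x y a b ha hb hab
      show (a : EReal) * -h x + (b : EReal) * -h y ≤ -h (a • x + b • y)
      rw [mul_neg, mul_neg, ← sub_eq_add_neg,
        ← EReal.neg_add (Or.inl (coe_mul_ne_bot' ha (hhproper.1 x)))
          (Or.inr (coe_mul_ne_bot' hb (hhproper.1 y))),
        EReal.neg_le_neg_iff]
      exact hhconv x y a b ha hb hab
    obtain ⟨v₂, hv₂⟩ := fenchel_aux (fun u => -k u) (fun u => -h u) hh₂ hk₂ hconv₂ hconc₂ u₀
      (fun hc => h2 (EReal.neg_eq_top_iff.1 hc))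
      (fun hc => h1 (EReal.neg_eq_bot_iff.1 hc))
      hck.neg
    have e0 : (⨅ u : X₁, ((-k u) - (-h u))) = ⨅ u : X₁, (h u - k u) :=
      iInf_congr fun u => ereal_neg_sub_neg _ _
    rw [e0] at hv₂
    refine ⟨-v₂, ?_, fun v' => weak_duality h k hhproper.1 hkproper.1 v'⟩
    have e1 : (⨅ u : X₁, ((((-v₂) u : ℝ) : EReal) - k u))
        = -(⨆ u : X₁, (((v₂ u : ℝ) : EReal) - (-k u))) := by
      have : ∀ u : X₁, (((-v₂) u : ℝ) : EReal) - k u = -(((v₂ u : ℝ) : EReal) + k u) := by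
        intro u
        rw [ContinuousLinearMap.neg_apply, EReal.coe_neg,
          EReal.neg_add (Or.inl (EReal.coe_ne_bot _)) (Or.inl (EReal.coe_ne_top _))]
      rw [iInf_congr this, ereal_iInf_neg]
      congr 1
      exact iSup_congr fun u => (ereal_sub_neg _ _).symm
    have e2 : (⨆ u : X₁, ((((-v₂) u : ℝ) : EReal) - h u))
        = -(⨅ u : X₁, (((v₂ u : ℝ) : EReal) - (-h u))) := by
      have : ∀ u : X₁, (((-v₂) u : ℝ) : EReal) - h u = -(((v₂ u : ℝ) : EReal) + h u) := by
        intro u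
        rw [ContinuousLinearMap.neg_apply, EReal.coe_neg,
          EReal.neg_add (Or.inl (EReal.coe_ne_bot _)) (Or.inl (EReal.coe_ne_top _))]
      rw [iSup_congr this, ereal_iSup_neg]
      congr 1
      exact iInf_congr fun u => (ereal_sub_neg _ _).symm
    rw [e1, e2, ereal_neg_sub_neg]
    exact hv₂
end
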